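/- Existence and uniqueness of identity-by-state probabilities: let P be any N×N real row-stochastic matrix (P_{ij} ≥ 0 and Σ_k P_{ik} = 1 for all i) and let u ∈ ℝ with 0 < u ≤ 1. Then there exists exactly one N×N real matrix φ satisfying φ_{ii} = 1 for all i and φ_{ij} = u/2 + ((1−u)/2) Σ_k P_{ik} φ_{kj} + ((1−u)/2) Σ_k P_{jk} φ_{ik} for all i ≠ j. -/

import Mathlib

open Matrix

/-- Existence and uniqueness of identity-by-state probabilities: for any row-stochastic
`P` and mutation rate `0 < u ≤ 1`, there is exactly one matrix `φ` with `φ_{ii} = 1` and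
`φ_{ij} = u/2 + ((1-u)/2) ∑_k P_{ik} φ_{kj} + ((1-u)/2) ∑_k P_{jk} φ_{ik}` for `i ≠ j`. -/
theorem identity_by_state_exists_unique
    (N : ℕ) (P : Matrix (Fin N) (Fin N) ℝ)
    (hPnn : ∀ i j, 0 ≤ P i j)
    (hProw : ∀ i, ∑ k, P i k = 1)
    (u : ℝ) (hu0 : 0 < u) (hu1 : u ≤ 1) :
    ∃! φ : Matrix (Fin N) (Fin N) ℝ, (∀ i, φ i i = 1) ∧ ∀ i j, i ≠ j →
      φ i j = u / 2 + ((1 - u) / 2) * ∑ k, P i k * φ k j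
        + ((1 - u) / 2) * ∑ k, P j k * φ i k := by
  set c : ℝ := (1 - u) / 2 with hc
  have hc0 : 0 ≤ c := by rw [hc]; linarith
  set T : (Fin N → Fin N → ℝ) → (Fin N → Fin N → ℝ) := fun φ i j =>
    if i = j then 1 else u / 2 + c * ∑ k, P i k * φ k j + c * ∑ k, P j k * φ i k with hT
  have hprop : ∀ φ : Fin N → Fin N → ℝ,
      ((∀ i, φ i i = 1) ∧ ∀ i j, i ≠ j →
        φ i j = u / 2 + c * ∑ k, P i k * φ k j + c * ∑ k, P j k * φ i k)
      ↔ Function.IsFixedPt T φ := by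
    intro φ
    constructor
    · rintro ⟨h1, h2⟩
      funext i j
      by_cases hij : i = j
      · subst hij; simp [hT, h1]
      · simp only [hT, if_neg hij]
        exact (h2 i j hij).symm
    · intro h
      constructor
      · intro i
        have := congrFun (congrFun h i) i
        simpa [hT] using this.symm
      · intro i j hij
        have := congrFun (congrFun h i) j
        simp only [hT, if_neg hij] at this
        exact this.symm
  -- contraction estimate
  have hK : (0:ℝ) ≤ 1 - u := by linarith
  have hlip : LipschitzWith ⟨1 - u, hK⟩ T := by
    apply LipschitzWith.of_dist_le_mul
    intro φ ψ
    change dist (T φ) (T ψ) ≤ ((NNReal.mk (1 - u) hK : NNReal) : ℝ) * dist φ ψ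
    rw [NNReal.coe_mk]
    have hD0 : 0 ≤ dist φ ψ := dist_nonneg
    have hbound : 0 ≤ (1 - u) * dist φ ψ := mul_nonneg hK hD0
    rw [dist_pi_le_iff hbound]
    intro i
    rw [dist_pi_le_iff hbound]
    intro j
    have hentry : ∀ a b, dist (φ a b) (ψ a b) ≤ dist φ ψ :=
      fun a b => le_trans (dist_le_pi_dist (φ a) (ψ a) b) (dist_le_pi_dist φ ψ a)
    by_cases hij : i = j
    · simp [hT, hij, hbound]
    · simp only [hT, if_neg hij, Real.dist_eq]
      have hdiff : (u / 2 + c * ∑ k, P i k * φ k j + c * ∑ k, P j k * φ i k)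
          - (u / 2 + c * ∑ k, P i k * ψ k j + c * ∑ k, P j k * ψ i k)
          = c * ∑ k, P i k * (φ k j - ψ k j) + c * ∑ k, P j k * (φ i k - ψ i k) := by
        simp only [mul_sub, Finset.sum_sub_distrib]
        ring
      rw [hdiff]
      have h1 : |c * ∑ k, P i k * (φ k j - ψ k j)| ≤ c * dist φ ψ := by
        rw [abs_mul, abs_of_nonneg hc0]
        apply mul_le_mul_of_nonneg_left _ hc0
        calc |∑ k, P i k * (φ k j - ψ k j)| ≤ ∑ k, |P i k * (φ k j - ψ k j)| :=
              Finset.abs_sum_le_sum_abs _ _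
          _ ≤ ∑ k, P i k * dist φ ψ := by
              apply Finset.sum_le_sum
              intro k _
              rw [abs_mul, abs_of_nonneg (hPnn i k)]
              exact mul_le_mul_of_nonneg_left (by simpa [Real.dist_eq] using hentry k j)
                (hPnn i k)
          _ = dist φ ψ := by rw [← Finset.sum_mul, hProw i, one_mul]
      have h2 : |c * ∑ k, P j k * (φ i k - ψ i k)| ≤ c * dist φ ψ := by
        rw [abs_mul, abs_of_nonneg hc0]
        apply mul_le_mul_of_nonneg_left _ hc0
        calc |∑ k, P j k * (φ i k - ψ i k)| ≤ ∑ k, |P j k * (φ i k - ψ i k)| :=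
              Finset.abs_sum_le_sum_abs _ _
          _ ≤ ∑ k, P j k * dist φ ψ := by
              apply Finset.sum_le_sum
              intro k _
              rw [abs_mul, abs_of_nonneg (hPnn j k)]
              exact mul_le_mul_of_nonneg_left (by simpa [Real.dist_eq] using hentry i k)
                (hPnn j k)
          _ = dist φ ψ := by rw [← Finset.sum_mul, hProw j, one_mul]
      calc |c * ∑ k, P i k * (φ k j - ψ k j) + c * ∑ k, P j k * (φ i k - ψ i k)|
          ≤ |c * ∑ k, P i k * (φ k j - ψ k j)| + |c * ∑ k, P j k * (φ i k - ψ i k)| :=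
            abs_add_le _ _
        _ ≤ c * dist φ ψ + c * dist φ ψ := add_le_add h1 h2
        _ = (1 - u) * dist φ ψ := by rw [hc]; ring
  have hcontr : ContractingWith ⟨1 - u, hK⟩ T := by
    refine ⟨?_, hlip⟩
    change NNReal.mk (1 - u) hK < 1
    rw [← NNReal.coe_lt_coe]
    simpa using by linarith
  have hfix : Function.IsFixedPt T (ContractingWith.fixedPoint T hcontr) :=
    hcontr.fixedPoint_isFixedPt
  refine ⟨show (Fin N → Fin N → ℝ) from ContractingWith.fixedPoint T hcontr,
    (hprop _).2 hfix, ?_⟩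
  intro ψ hψ
  exact hcontr.fixedPoint_unique ((hprop ψ).1 hψ)
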